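/- Let Λ be a totally ordered abelian group, E a set, and ω a projective valuation on E, i.e. a map from ordered quadruples of pairwise distinct elements of E to Λ satisfying (PV1) ω(a,b;c,d)=ω(c,d;a,b)=−ω(a,b;d,c), (PV2) if ω(a,b;c,d)=k>0 then ω(a,d;c,b)=k and ω(a,c;b,d)=0, and (PV3) ω(a,b;d,e)+ω(b,c;d,e)=ω(a,c;d,e). Then for pairwise distinct a, a₁, a₂, a₃ ∈ E, exactly one of the following four cases occurs: (1) ω(a₁,a;a₂,a₃) > 0; (2) ω(a₂,a;a₃,a₁) > 0; (3) ω(a₃,a;a₁,a₂) > 0; (4) ω(a_i,a;a_j,a_k) = 0 for all permutations {i,j,k} = {1,2,3}. -/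

import Mathlib

/-- Pairwise distinctness of a quadruple. -/
def Distinct4 {E : Type*} (a b c d : E) : Prop :=
  a ≠ b ∧ a ≠ c ∧ a ≠ d ∧ b ≠ c ∧ b ≠ d ∧ c ≠ d

private lemma key {Λ E : Type*} [AddCommGroup Λ] [LinearOrder Λ] [IsOrderedAddMonoid Λ]
    (ω : E → E → E → E → Λ)
    (pv1 : ∀ a b c d, Distinct4 a b c d → ω a b c d = ω c d a b)
    (pv1' : ∀ a b c d, Distinct4 a b c d → ω a b c d = -ω a b d c)
    (pv2 : ∀ a b c d, Distinct4 a b c d → 0 < ω a b c d →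
      ω a d c b = ω a b c d ∧ ω a c b d = 0)
    (a b c d : E) (h : Distinct4 a b c d) (hu : 0 < ω b a c d) :
    ω c a d b = -ω b a c d ∧ ω d a b c = 0 := by
  obtain ⟨hab, hac, had, hbc, hbd, hcd⟩ := h
  have hba := hab.symm; have hca := hac.symm; have hda := had.symm
  have hcb := hbc.symm; have hdb := hbd.symm; have hdc := hcd.symm
  have h2 := pv2 b a c d (by refine ⟨?_, ?_, ?_, ?_, ?_, ?_⟩ <;> assumption) hu
  have e1 : ω b c d a = ω d a b c :=
    pv1 b c d a (by refine ⟨?_, ?_, ?_, ?_, ?_, ?_⟩ <;> assumption)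
  have e2 : ω b c a d = -ω b c d a :=
    pv1' b c a d (by refine ⟨?_, ?_, ?_, ?_, ?_, ?_⟩ <;> assumption)
  have e4 : ω b d c a = ω c a b d :=
    pv1 b d c a (by refine ⟨?_, ?_, ?_, ?_, ?_, ?_⟩ <;> assumption)
  have e5 : ω c a b d = -ω c a d b :=
    pv1' c a b d (by refine ⟨?_, ?_, ?_, ?_, ?_, ?_⟩ <;> assumption)
  constructor
  · rw [← h2.1, e4, e5, neg_neg]
  · rw [← e1]
    have e2' := e2
    rw [h2.2] at e2'
    exact neg_eq_zero.mp e2'.symm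

/-- The 3-point lemma for projective valuations: for pairwise distinct `a, a₁, a₂, a₃`,
exactly one of the four cases occurs: one of the three cyclic values is positive, or all
values `ω(a_i, a; a_j, a_k)` vanish. -/
theorem stmt6 {Λ E : Type*} [AddCommGroup Λ] [LinearOrder Λ] [IsOrderedAddMonoid Λ]
    (ω : E → E → E → E → Λ)
    (pv1 : ∀ a b c d, Distinct4 a b c d → ω a b c d = ω c d a b)
    (pv1' : ∀ a b c d, Distinct4 a b c d → ω a b c d = -ω a b d c)
    (pv2 : ∀ a b c d, Distinct4 a b c d → 0 < ω a b c d →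
      ω a d c b = ω a b c d ∧ ω a c b d = 0)
    (pv3 : ∀ a b c d e, Distinct4 a b d e → Distinct4 b c d e → Distinct4 a c d e →
      ω a b d e + ω b c d e = ω a c d e)
    (a a1 a2 a3 : E) (h : Distinct4 a a1 a2 a3) :
    let P1 := 0 < ω a1 a a2 a3
    let P2 := 0 < ω a2 a a3 a1
    let P3 := 0 < ω a3 a a1 a2
    let P4 := ω a1 a a2 a3 = 0 ∧ ω a2 a a3 a1 = 0 ∧ ω a3 a a1 a2 = 0 ∧
      ω a1 a a3 a2 = 0 ∧ ω a2 a a1 a3 = 0 ∧ ω a3 a a2 a1 = 0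
    (P1 ∨ P2 ∨ P3 ∨ P4) ∧ ¬(P1 ∧ P2) ∧ ¬(P1 ∧ P3) ∧ ¬(P1 ∧ P4) ∧
      ¬(P2 ∧ P3) ∧ ¬(P2 ∧ P4) ∧ ¬(P3 ∧ P4) := by
  intro P1 P2 P3 P4
  obtain ⟨h1, h2, h3, h4, h5, h6⟩ := h
  have h1' := h1.symm; have h2' := h2.symm; have h3' := h3.symm
  have h4' := h4.symm; have h5' := h5.symm; have h6' := h6.symm
  -- reversal identities from pv1'
  have r1 : ω a1 a a2 a3 = -ω a1 a a3 a2 :=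
    pv1' a1 a a2 a3 (by refine ⟨?_, ?_, ?_, ?_, ?_, ?_⟩ <;> assumption)
  have r2 : ω a2 a a3 a1 = -ω a2 a a1 a3 :=
    pv1' a2 a a3 a1 (by refine ⟨?_, ?_, ?_, ?_, ?_, ?_⟩ <;> assumption)
  have r3 : ω a3 a a1 a2 = -ω a3 a a2 a1 :=
    pv1' a3 a a1 a2 (by refine ⟨?_, ?_, ?_, ?_, ?_, ?_⟩ <;> assumption)
  -- positive cases
  have F1 : 0 < ω a1 a a2 a3 → ω a2 a a3 a1 = -ω a1 a a2 a3 ∧ ω a3 a a1 a2 = 0 :=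
    key ω pv1 pv1' pv2 a a1 a2 a3 (by refine ⟨?_, ?_, ?_, ?_, ?_, ?_⟩ <;> assumption)
  have F2 : 0 < ω a2 a a3 a1 → ω a3 a a1 a2 = -ω a2 a a3 a1 ∧ ω a1 a a2 a3 = 0 :=
    key ω pv1 pv1' pv2 a a2 a3 a1 (by refine ⟨?_, ?_, ?_, ?_, ?_, ?_⟩ <;> assumption)
  -- negative cases, via the reversed quadruples
  have G1 : ω a1 a a2 a3 < 0 → ω a3 a a2 a1 = -ω a1 a a3 a2 ∧ ω a2 a a1 a3 = 0 := by
    intro hu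
    refine key ω pv1 pv1' pv2 a a1 a3 a2
      (by refine ⟨?_, ?_, ?_, ?_, ?_, ?_⟩ <;> assumption) ?_
    have h0 := neg_pos.mpr hu
    rwa [r1, neg_neg] at h0
  have G2 : ω a2 a a3 a1 < 0 → ω a1 a a3 a2 = -ω a2 a a1 a3 ∧ ω a3 a a2 a1 = 0 := by
    intro hv
    refine key ω pv1 pv1' pv2 a a2 a1 a3
      (by refine ⟨?_, ?_, ?_, ?_, ?_, ?_⟩ <;> assumption) ?_
    have h0 := neg_pos.mpr hv
    rwa [r2, neg_neg] at h0
  have G3 : ω a3 a a1 a2 < 0 → ω a2 a a1 a3 = -ω a3 a a2 a1 ∧ ω a1 a a3 a2 = 0 := by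
    intro hw
    refine key ω pv1 pv1' pv2 a a3 a2 a1
      (by refine ⟨?_, ?_, ?_, ?_, ?_, ?_⟩ <;> assumption) ?_
    have h0 := neg_pos.mpr hw
    rwa [r3, neg_neg] at h0
  refine ⟨?_, ?_, ?_, ?_, ?_, ?_, ?_⟩
  · rcases lt_trichotomy (ω a1 a a2 a3) 0 with hu | hu | hu
    · -- u < 0 : P3 holds
      obtain ⟨g1, g2⟩ := G1 hu
      refine Or.inr (Or.inr (Or.inl ?_))
      show 0 < ω a3 a a1 a2
      rw [r3, g1, neg_neg]
      have h0 := neg_pos.mpr hu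
      rwa [r1, neg_neg] at h0
    · rcases lt_trichotomy (ω a2 a a3 a1) 0 with hv | hv | hv
      · -- u = 0, v < 0 : contradiction
        exfalso
        obtain ⟨g1, g2⟩ := G2 hv
        have hu' := hu
        rw [r1, g1, neg_neg] at hu'
        have r2' := r2
        rw [hu', neg_zero] at r2'
        exact hv.ne r2'
      · rcases lt_trichotomy (ω a3 a a1 a2) 0 with hw | hw | hw
        · -- u = v = 0, w < 0 : contradiction
          exfalso
          obtain ⟨g1, g2⟩ := G3 hw
          have hv' := hv
          rw [r2, g1, neg_neg] at hv'
          have r3' := r3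
          rw [hv', neg_zero] at r3'
          exact hw.ne r3'
        · -- all zero : P4
          refine Or.inr (Or.inr (Or.inr ⟨hu, hv, hw, ?_, ?_, ?_⟩))
          · have hu' := hu; rw [r1] at hu'; exact neg_eq_zero.mp hu'
          · have hv' := hv; rw [r2] at hv'; exact neg_eq_zero.mp hv'
          · have hw' := hw; rw [r3] at hw'; exact neg_eq_zero.mp hw'
        · exact Or.inr (Or.inr (Or.inl hw))
      · exact Or.inr (Or.inl hv)
    · exact Or.inl hu
  · rintro ⟨p, q⟩
    obtain ⟨g1, g2⟩ := F1 p
    have hvneg : ω a2 a a3 a1 < 0 := by rw [g1]; exact neg_lt_zero.mpr p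
    exact lt_asymm hvneg q
  · rintro ⟨p, q⟩
    obtain ⟨g1, g2⟩ := F1 p
    exact (show (0:Λ) < ω a3 a a1 a2 from q).ne' g2
  · rintro ⟨p, q⟩
    exact (show (0:Λ) < ω a1 a a2 a3 from p).ne' q.1
  · rintro ⟨p, q⟩
    obtain ⟨g1, g2⟩ := F2 p
    have hwneg : ω a3 a a1 a2 < 0 := by rw [g1]; exact neg_lt_zero.mpr p
    exact lt_asymm hwneg q
  · rintro ⟨p, q⟩
    exact (show (0:Λ) < ω a2 a a3 a1 from p).ne' q.2.1
  · rintro ⟨p, q⟩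
    exact (show (0:Λ) < ω a3 a a1 a2 from p).ne' q.2.2.1
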